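/- Let t ≥ 1 and let f : (Fin (2t) → ZMod 2) → ZMod 2 be a bent function (Nl(f) = 2^{2t−1} − 2^{t−1}) with f(0) = 0. Then the Cayley graph G_f is exactly one of the following two strongly regular graphs: either G_f satisfies IsSRGWith 2^{2t} (2^{2t−1} + 2^{t−1}) (2^{2t−2} + 2^{t−1}) (2^{2t−2} + 2^{t−1}), or G_f satisfies IsSRGWith 2^{2t} (2^{2t−1} − 2^{t−1}) (2^{2t−2} − 2^{t−1}) (2^{2t−2} − 2^{t−1}). -/
import Mathlib


/-- The nonlinearity of a Boolean function `f`: the minimum Hamming distance from `f`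
to an affine function `x ↦ a·x + c`. -/
noncomputable def nonlinearity {n : ℕ} (f : (Fin n → ZMod 2) → ZMod 2) : ℕ :=
  sInf {d : ℕ | ∃ (a : Fin n → ZMod 2) (c : ZMod 2),
    d = (Finset.univ.filter (fun x : Fin n → ZMod 2 =>
      f x ≠ (∑ i, a i * x i) + c)).card}

/-- The Cayley graph of `Z_2^n` with connection set the support of `f`:
distinct vertices `u`, `v` are adjacent iff `f (u + v) = 1`. -/
def cayleyGraph {n : ℕ} (f : (Fin n → ZMod 2) → ZMod 2) :
    SimpleGraph (Fin n → ZMod 2) :=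
  SimpleGraph.fromRel (fun u v => f (u + v) = 1)

instance {n : ℕ} (f : (Fin n → ZMod 2) → ZMod 2) :
    DecidableRel (cayleyGraph f).Adj := fun u v =>
  inferInstanceAs (Decidable (u ≠ v ∧ (f (u + v) = 1 ∨ f (v + u) = 1)))


namespace BentAux
open Finset

variable {n : ℕ}

abbrev V (n : ℕ) := Fin n → ZMod 2

def sg (b : ZMod 2) : ℤ := if b = 1 then -1 else 1

lemma sg_add (x y : ZMod 2) : sg (x + y) = sg x * sg y := by revert x y; decide

lemma sg_sq (x : ZMod 2) : sg x * sg x = 1 := by revert x; decide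

lemma sg_eq (b : ZMod 2) : sg b = 1 - 2 * (if b = 1 then (1:ℤ) else 0) := by revert b; decide

lemma card_V : Fintype.card (V n) = 2 ^ n := by
  simp [Fintype.card_fun]

lemma two_mul_card (g : V n → ZMod 2) :
    2 * ((univ.filter (fun x => g x = 1)).card : ℤ) = 2 ^ n - ∑ x, sg (g x) := by
  have : ∑ x, sg (g x) = ∑ x : V n, (1 - 2 * (if g x = 1 then (1:ℤ) else 0)) := by
    simp_rw [sg_eq]
  rw [this, Finset.sum_sub_distrib, Finset.sum_const, ← Finset.mul_sum, Finset.sum_boole]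
  simp [card_V]

lemma four_mul_card (g h : V n → ZMod 2) :
    4 * ((univ.filter (fun x => g x = 1 ∧ h x = 1)).card : ℤ)
      = ∑ x, (1 - sg (g x)) * (1 - sg (h x)) := by
  have key : ∀ p q : ZMod 2, (1 - sg p) * (1 - sg q) = if (p = 1 ∧ q = 1) then (4:ℤ) else 0 := by
    decide
  simp_rw [key]
  rw [Finset.sum_ite, Finset.sum_const, Finset.sum_const]
  simp [mul_comm]

lemma self_add_self (x : V n) : x + x = 0 := by
  funext i
  have : ∀ b : ZMod 2, b + b = 0 := by decide
  exact this (x i)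

lemma sum_shift (F : V n → ℤ) (u : V n) : ∑ x : V n, F (u + x) = ∑ x, F x :=
  Fintype.sum_equiv (Equiv.addLeft u) _ _ (fun _ => rfl)

lemma sum_sg_dot (w : V n) :
    ∑ a : V n, sg (∑ i, a i * w i) = if w = 0 then (2:ℤ)^n else 0 := by
  by_cases hw : w = 0
  · subst hw
    simp [sg, card_V]
  · simp only [if_neg hw]
    obtain ⟨i, hi⟩ : ∃ i, w i ≠ 0 := by
      by_contra h
      push_neg at h
      exact hw (funext h)
    have hwi : w i = 1 := by
      have : ∀ b : ZMod 2, b ≠ 0 → b = 1 := by decide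
      exact this _ hi
    set e : V n := Pi.single i 1 with he
    have hdot : ∀ a : V n, ∑ j, (a + e) j * w j = (∑ j, a j * w j) + 1 := by
      intro a
      have : ∀ j, (a + e) j * w j = a j * w j + e j * w j := by
        intro j; simp [add_mul]
      simp_rw [this, Finset.sum_add_distrib]
      congr 1
      rw [he]
      rw [Finset.sum_eq_single i]
      · simp [hwi]
      · intro j _ hj; simp [Pi.single_apply, hj]
      · simp
    have key : ∀ a : V n, sg (∑ j, (a + e) j * w j) = - sg (∑ j, a j * w j) := by
      intro a
      rw [hdot, sg_add]
      have : sg 1 = -1 := by decide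
      rw [this]; ring
    have hre : ∑ a : V n, sg (∑ j, (a + e) j * w j) = ∑ a : V n, sg (∑ j, a j * w j) :=
      Fintype.sum_equiv (Equiv.addRight e) _ _ (fun _ => rfl)
    simp_rw [key] at hre
    rw [Finset.sum_neg_distrib] at hre
    linarith

def Wl (f : V n → ZMod 2) (a : V n) : ℤ := ∑ x : V n, sg (f x) * sg (∑ i, a i * x i)

lemma dot_split (a x y : V n) :
    ∑ i, a i * (x + y) i = (∑ i, a i * x i) + ∑ i, a i * y i := by
  rw [← Finset.sum_add_distrib]
  apply Finset.sum_congr rfl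
  intro i _
  simp [mul_add]

lemma expand_sq (f : V n → ZMod 2) (a w : V n) :
    Wl f a * Wl f a * sg (∑ i, a i * w i)
      = ∑ x : V n, ∑ y : V n, sg (f x) * sg (f y) * sg (∑ i, a i * (x + y + w) i) := by
  rw [Wl, Finset.sum_mul_sum, Finset.sum_mul]
  apply Finset.sum_congr rfl; intro x _
  rw [Finset.sum_mul]
  apply Finset.sum_congr rfl; intro y _
  rw [dot_split, dot_split, sg_add, sg_add]
  ring

lemma key_identity (f : V n → ZMod 2) (w : V n) :
    ∑ a : V n, Wl f a * Wl f a * sg (∑ i, a i * w i)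
      = 2^n * ∑ x : V n, sg (f x) * sg (f (x + w)) := by
  simp_rw [expand_sq]
  rw [Finset.sum_comm]
  have inner : ∀ x : V n, ∑ a : V n, ∑ y : V n, sg (f x) * sg (f y) * sg (∑ i, a i * (x + y + w) i)
      = 2^n * (sg (f x) * sg (f (x + w))) := by
    intro x
    rw [Finset.sum_comm]
    have : ∀ y : V n, ∑ a : V n, sg (f x) * sg (f y) * sg (∑ i, a i * (x + y + w) i)
        = sg (f x) * sg (f y) * (if x + y + w = 0 then (2:ℤ)^n else 0) := by
      intro y
      rw [← Finset.mul_sum, sum_sg_dot]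
    simp_rw [this]
    have hcond : ∀ y : V n, (x + y + w = 0) ↔ (y = x + w) := by
      intro y
      constructor
      · intro h
        have e1 : (x + y + w) + (x + w) = y := by
          have e2 : (x + y + w) + (x + w) = y + ((x + x) + (w + w)) := by abel
          rw [e2, self_add_self, self_add_self]; simp
        rw [← e1, h, zero_add]
      · intro h
        subst h
        have : x + (x + w) + w = (x + x) + (w + w) := by abel
        rw [this, self_add_self, self_add_self, add_zero]
    simp_rw [hcond, mul_ite, mul_zero]
    rw [Finset.sum_ite_eq' univ (x + w)]
    simp [mul_comm]
  simp_rw [inner]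
  rw [← Finset.mul_sum]

lemma parseval (f : V n → ZMod 2) :
    ∑ a : V n, Wl f a * Wl f a = 2^n * 2^n := by
  have h := key_identity f 0
  have h1 : ∀ a : V n, sg (∑ i, a i * (0:V n) i) = 1 := by
    intro a; simp [sg]
  have h2 : ∀ x : V n, sg (f x) * sg (f (x + 0)) = 1 := by
    intro x; rw [add_zero]; exact sg_sq _
  simp_rw [h1, mul_one, h2] at h
  rw [h]
  simp [card_V]

lemma autocorr (f : V n → ZMod 2) (hW : ∀ a : V n, Wl f a * Wl f a = 2^n)
    (w : V n) (hw : w ≠ 0) :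
    ∑ x : V n, sg (f x) * sg (f (x + w)) = 0 := by
  have h := key_identity f w
  simp_rw [hW] at h
  rw [← Finset.mul_sum, sum_sg_dot, if_neg hw, mul_zero] at h
  have h2n : (2:ℤ)^n ≠ 0 := by positivity
  exact (mul_eq_zero.mp h.symm).resolve_left h2n




open Finset

lemma adj_iff {n : ℕ} (f : V n → ZMod 2) (h0 : f 0 = 0) (u v : V n) :
    (cayleyGraph f).Adj u v ↔ f (u + v) = 1 := by
  constructor
  · rintro ⟨hne, h | h⟩
    · exact h
    · rwa [add_comm] at h
  · intro h
    refine ⟨?_, Or.inl h⟩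
    rintro rfl
    rw [self_add_self, h0] at h
    exact one_ne_zero h.symm

lemma degree_eq {n : ℕ} (f : V n → ZMod 2) (h0 : f 0 = 0) (u : V n) :
    ((cayleyGraph f).degree u : ℤ) = ((univ.filter (fun x => f x = 1)).card : ℤ) := by
  have h1 : (cayleyGraph f).degree u
      = (univ.filter (fun x => f (u + x) = 1)).card := by
    rw [← SimpleGraph.card_neighborFinset_eq_degree]
    congr 1
    ext x
    simp [SimpleGraph.mem_neighborFinset, adj_iff f h0]
  rw [h1]
  have := two_mul_card (fun x : V n => f (u + x))
  rw [sum_shift (fun x => sg (f x)) u] at this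
  have h2 := two_mul_card f
  have : 2 * ((univ.filter (fun x => f (u + x) = 1)).card : ℤ)
      = 2 * ((univ.filter (fun x => f x = 1)).card : ℤ) := by
    rw [this, h2]
  linarith

lemma common_card_eq {n : ℕ} (f : V n → ZMod 2) (h0 : f 0 = 0)
    (hW : ∀ a : V n, Wl f a * Wl f a = 2^n)
    (u v : V n) (huv : u ≠ v) :
    4 * ((Fintype.card ((cayleyGraph f).commonNeighbors u v)) : ℤ)
      = 4 * ((univ.filter (fun x => f x = 1)).card : ℤ) - 2^n := by
  have hcard : Fintype.card ((cayleyGraph f).commonNeighbors u v)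
      = (univ.filter (fun x => f (u + x) = 1 ∧ f (v + x) = 1)).card := by
    rw [← Set.toFinset_card]
    congr 1
    ext x
    simp [SimpleGraph.mem_commonNeighbors, adj_iff f h0]
  rw [hcard, four_mul_card]
  have expand : ∀ x : V n, (1 - sg (f (u + x))) * (1 - sg (f (v + x)))
      = 1 - sg (f (u + x)) - sg (f (v + x)) + sg (f (u + x)) * sg (f (v + x)) := by
    intro x; ring
  simp_rw [expand]
  rw [Finset.sum_add_distrib, Finset.sum_sub_distrib, Finset.sum_sub_distrib,
    Finset.sum_const, sum_shift (fun x => sg (f x)) u, sum_shift (fun x => sg (f x)) v]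
  have hw : u + v ≠ 0 := by
    intro h
    apply huv
    have h2 : u + (u + v) = u + 0 := by rw [h]
    rw [← add_assoc, self_add_self, zero_add, add_zero] at h2
    exact h2.symm
  have hlast : ∑ x : V n, sg (f (u + x)) * sg (f (v + x)) = 0 := by
    have hre : ∑ x : V n, sg (f (u + x)) * sg (f (v + x))
        = ∑ x : V n, sg (f x) * sg (f (x + (u + v))) := by
      rw [← sum_shift (fun x => sg (f (u + x)) * sg (f (v + x))) u]
      apply Finset.sum_congr rfl
      intro x _
      congr 2
      · rw [← add_assoc, self_add_self, zero_add]
      · abel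
    rw [hre]
    exact autocorr f hW (u + v) hw
  rw [hlast]
  have h2 := two_mul_card f
  have hcu : (#(univ : Finset (V n)) : ℤ) = 2^n := by
    rw [Finset.card_univ, card_V]; push_cast; ring
  simp only [nsmul_eq_mul, mul_one]
  rw [hcu]
  linarith



lemma dist_formula {n : ℕ} (f : V n → ZMod 2) (a : V n) (c : ZMod 2) :
    sg c * Wl f a = 2^n - 2 * ((univ.filter (fun x : V n =>
      f x ≠ (∑ i, a i * x i) + c)).card : ℤ) := by
  have key : ∀ x : V n, sg (f x + ((∑ i, a i * x i) + c))
      = sg c * (sg (f x) * sg (∑ i, a i * x i)) := by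
    intro x; rw [sg_add, sg_add]; ring
  have hthis := two_mul_card (fun x : V n => f x + ((∑ i, a i * x i) + c))
  simp_rw [key] at hthis
  rw [← Finset.mul_sum] at hthis
  have hfe : (univ.filter (fun x : V n => f x + ((∑ i, a i * x i) + c) = 1))
      = (univ.filter (fun x : V n => f x ≠ (∑ i, a i * x i) + c)) := by
    apply Finset.filter_congr
    intro x _
    have : ∀ p q : ZMod 2, (p + q = 1) ↔ ¬(p = q) := by decide
    exact this (f x) ((∑ i, a i * x i) + c)
  rw [hfe] at hthis
  have hWdef : Wl f a = ∑ x : V n, sg (f x) * sg (∑ i, a i * x i) := rfl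
  rw [← hWdef] at hthis
  linarith

theorem bent_cayleyGraph_srg_parameters' (t : ℕ) (ht : 1 ≤ t)
    (f : (Fin (2 * t) → ZMod 2) → ZMod 2) (h0 : f 0 = 0)
    (hbent : nonlinearity f = 2 ^ (2 * t - 1) - 2 ^ (t - 1)) :
    Xor'
      ((cayleyGraph f).IsSRGWith (2 ^ (2 * t)) (2 ^ (2 * t - 1) + 2 ^ (t - 1))
        (2 ^ (2 * t - 2) + 2 ^ (t - 1)) (2 ^ (2 * t - 2) + 2 ^ (t - 1)))
      ((cayleyGraph f).IsSRGWith (2 ^ (2 * t)) (2 ^ (2 * t - 1) - 2 ^ (t - 1))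
        (2 ^ (2 * t - 2) - 2 ^ (t - 1)) (2 ^ (2 * t - 2) - 2 ^ (t - 1))) := by
  have e1 : (2:ℤ) * 2^(2*t-1) = 2^(2*t) := by
    rw [← pow_succ']; congr 1; omega
  have e2 : (2:ℤ) * 2^(t-1) = 2^t := by
    rw [← pow_succ']; congr 1; omega
  have e3 : (4:ℤ) * 2^(2*t-2) = 2^(2*t) := by
    have : (4:ℤ) = 2^2 := by norm_num
    rw [this, ← pow_add]; congr 1; omega
  have e4 : (2:ℤ)^t * 2^t = 2^(2*t) := by
    rw [← pow_add]; congr 1; omega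
  -- lower bound on every affine distance
  have hlow : ∀ (a : V (2*t)) (c : ZMod 2),
      (2^(2*t-1) - 2^(t-1) : ℤ) ≤ ((univ.filter (fun x : V (2*t) =>
        f x ≠ (∑ i, a i * x i) + c)).card : ℤ) := by
    intro a c
    have hsub : (2:ℕ)^(t-1) ≤ 2^(2*t-1) := Nat.pow_le_pow_right (by omega) (by omega)
    have hmem : ((univ.filter (fun x : V (2*t) =>
        f x ≠ (∑ i, a i * x i) + c)).card) ∈ {d : ℕ | ∃ (a : Fin (2*t) → ZMod 2) (c : ZMod 2),
        d = (Finset.univ.filter (fun x : Fin (2*t) → ZMod 2 =>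
          f x ≠ (∑ i, a i * x i) + c)).card} := ⟨a, c, rfl⟩
    have hle : nonlinearity f ≤ (univ.filter (fun x : V (2*t) =>
        f x ≠ (∑ i, a i * x i) + c)).card := Nat.sInf_le hmem
    rw [hbent] at hle
    have hc := Nat.cast_le (α := ℤ) |>.mpr hle
    rw [Nat.cast_sub hsub] at hc
    push_cast at hc
    exact hc
    
  -- Walsh coefficients bounded
  have hWb : ∀ a : V (2*t), Wl f a * Wl f a ≤ 2^(2*t) := by
    intro a
    have h0c := dist_formula f a 0
    have h1c := dist_formula f a 1
    have s0 : sg 0 = 1 := by decide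
    have s1 : sg 1 = -1 := by decide
    rw [s0, one_mul] at h0c
    rw [s1] at h1c
    have l0 := hlow a 0
    have l1 := hlow a 1
    nlinarith [h0c, h1c, l0, l1, e1, e2, e4]
  -- Walsh coefficients all equal 2^(2t) in square
  have hWall : ∀ a : V (2*t), Wl f a * Wl f a = 2^(2*t) := by
    have hs := parseval (n := 2*t) f
    have hz : ∑ a : V (2*t), ((2:ℤ)^(2*t) - Wl f a * Wl f a) = 0 := by
      rw [Finset.sum_sub_distrib, Finset.sum_const, hs]
      simp only [nsmul_eq_mul, Finset.card_univ, card_V]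
      push_cast
      ring
    intro a
    have := (Finset.sum_eq_zero_iff_of_nonneg
      (fun b _ => by linarith [hWb b])).mp hz a (mem_univ a)
    linarith
  -- weight of f
  have hA2 : 2 * (((univ.filter (fun x : V (2*t) => f x = 1)).card) : ℤ)
      = 2^(2*t) - Wl f 0 := by
    have h2 := two_mul_card f
    have hW0 : Wl f 0 = ∑ x : V (2*t), sg (f x) := by
      rw [Wl]
      apply Finset.sum_congr rfl
      intro x _
      have : (∑ i, (0 : V (2*t)) i * x i) = 0 := by simp
      rw [this, show sg 0 = 1 from by decide, mul_one]
    rw [hW0]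
    linarith
  have hW0cases : Wl f 0 = 2^t ∨ Wl f 0 = -(2^t) := by
    have h := hWall 0
    rw [← e4] at h
    exact mul_self_eq_mul_self_iff.mp h
  -- regularity
  have hreg : ∀ u : V (2*t), ((cayleyGraph f).degree u : ℤ)
      = (((univ.filter (fun x : V (2*t) => f x = 1)).card) : ℤ) := degree_eq f h0
  have hcom : ∀ u v : V (2*t), u ≠ v →
      4 * ((Fintype.card ((cayleyGraph f).commonNeighbors u v)) : ℤ)
        = 4 * (((univ.filter (fun x : V (2*t) => f x = 1)).card) : ℤ) - 2^(2*t) :=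
    common_card_eq f h0 hWall
  have hcardV : Fintype.card (V (2*t)) = 2^(2*t) := card_V
  have ht1 : (1:ℕ) ≤ 2^(t-1) := Nat.one_le_two_pow
  have htk : (2:ℕ)^(t-1) ≤ 2^(2*t-1) := Nat.pow_le_pow_right (by omega) (by omega)
  rcases hW0cases with hW0 | hW0
  · -- Wl f 0 = 2^t : negative case (smaller graph)
    right
    constructor
    · have hAk : (((univ.filter (fun x : V (2*t) => f x = 1)).card) : ℤ)
          = 2^(2*t-1) - 2^(t-1) := by rw [hW0] at hA2; linarith
      have hkN : ((2^(2*t-1) - 2^(t-1) : ℕ) : ℤ) = 2^(2*t-1) - 2^(t-1) := by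
        rw [Nat.cast_sub htk]; push_cast; ring
      have hlN : ((2^(2*t-2) - 2^(t-1) : ℕ) : ℤ) = 2^(2*t-2) - 2^(t-1) := by
        rw [Nat.cast_sub (Nat.pow_le_pow_right (by omega) (by omega))]; push_cast; ring
      have hcc : ∀ u v : V (2*t), u ≠ v →
          Fintype.card ((cayleyGraph f).commonNeighbors u v) = 2^(2*t-2) - 2^(t-1) := by
        intro u v huv
        have h4 := hcom u v huv
        rw [hAk] at h4
        have : ((Fintype.card ((cayleyGraph f).commonNeighbors u v)) : ℤ)
            = ((2^(2*t-2) - 2^(t-1) : ℕ) : ℤ) := by rw [hlN]; linarith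
        exact_mod_cast this
      exact {
        card := by rw [hcardV]
        regular := fun u => by
          have := hreg u
          rw [hAk, ← hkN] at this
          exact_mod_cast this
        of_adj := fun u v h => hcc u v h.ne
        of_not_adj := fun u v huv _ => hcc u v huv }
    · intro hsrg
      have h1 := hsrg.regular 0
      have h2 := (by
        have hAk : (((univ.filter (fun x : V (2*t) => f x = 1)).card) : ℤ)
            = 2^(2*t-1) - 2^(t-1) := by rw [hW0] at hA2; linarith
        have := hreg 0
        rw [hAk] at this
        exact this : ((cayleyGraph f).degree 0 : ℤ) = 2^(2*t-1) - 2^(t-1))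
      rw [h1] at h2
      push_cast at h2
      have : (2:ℤ)^(t-1) ≥ 1 := by exact_mod_cast ht1
      linarith
  · -- Wl f 0 = -2^t : positive case
    left
    constructor
    · have hAk : (((univ.filter (fun x : V (2*t) => f x = 1)).card) : ℤ)
          = 2^(2*t-1) + 2^(t-1) := by rw [hW0] at hA2; linarith
      have hcc : ∀ u v : V (2*t), u ≠ v →
          Fintype.card ((cayleyGraph f).commonNeighbors u v) = 2^(2*t-2) + 2^(t-1) := by
        intro u v huv
        have h4 := hcom u v huv
        rw [hAk] at h4
        have : ((Fintype.card ((cayleyGraph f).commonNeighbors u v)) : ℤ)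
            = ((2^(2*t-2) + 2^(t-1) : ℕ) : ℤ) := by push_cast; linarith
        exact_mod_cast this
      exact {
        card := by rw [hcardV]
        regular := fun u => by
          have h := hreg u
          rw [hAk] at h
          have : ((cayleyGraph f).degree u : ℤ) = ((2^(2*t-1) + 2^(t-1) : ℕ) : ℤ) := by
            push_cast; linarith
          exact_mod_cast this
        of_adj := fun u v h => hcc u v h.ne
        of_not_adj := fun u v huv _ => hcc u v huv }
    · intro hsrg
      have h1 := hsrg.regular 0
      have hAk : (((univ.filter (fun x : V (2*t) => f x = 1)).card) : ℤ)
          = 2^(2*t-1) + 2^(t-1) := by rw [hW0] at hA2; linarith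
      have h2 := hreg 0
      rw [hAk, h1] at h2
      rw [Nat.cast_sub htk] at h2
      push_cast at h2
      have : (2:ℤ)^(t-1) ≥ 1 := by exact_mod_cast ht1
      linarith

end BentAux

theorem bent_cayleyGraph_srg_parameters (t : ℕ) (ht : 1 ≤ t)
    (f : (Fin (2 * t) → ZMod 2) → ZMod 2) (h0 : f 0 = 0)
    (hbent : nonlinearity f = 2 ^ (2 * t - 1) - 2 ^ (t - 1)) :
    Xor'
      ((cayleyGraph f).IsSRGWith (2 ^ (2 * t)) (2 ^ (2 * t - 1) + 2 ^ (t - 1))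
        (2 ^ (2 * t - 2) + 2 ^ (t - 1)) (2 ^ (2 * t - 2) + 2 ^ (t - 1)))
      ((cayleyGraph f).IsSRGWith (2 ^ (2 * t)) (2 ^ (2 * t - 1) - 2 ^ (t - 1))
        (2 ^ (2 * t - 2) - 2 ^ (t - 1)) (2 ^ (2 * t - 2) - 2 ^ (t - 1))) :=
  BentAux.bent_cayleyGraph_srg_parameters' t ht f h0 hbent
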